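/- Let 𝔤 be the 4-dimensional real Lie algebra with basis X₁, X₂, Y₁, Y₂ whose only nonvanishing brackets among basis elements are [X₁, X₂] = (1/2)(X₂ + Y₂), [X₁, Y₁] = Y₁, [X₁, Y₂] = (1/2)Y₂, and [X₂, Y₂] = Y₁. Let Ω be the alternating bilinear form with Ω(X₁,Y₁) = Ω(X₂,Y₂) = 1 and Ω vanishing on all other pairs of distinct basis elements, and let j be the linear map with jX_i = Y_i and jY_i = −X_i (i = 1, 2). Then Ω is a nondegenerate 2-cocycle, j is a positive compatible complex structure, the span of the image of N^j equals span{X₂, Y₂}, this span is not involutive, its Ω-orthogonal complement equals span{X₁, Y₁}, and that complement is involutive. -/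

import Mathlib

/-- The algebraic Nijenhuis tensor of a linear map `j` on a Lie algebra. -/
def algNijenhuis {𝔤 : Type*} [LieRing 𝔤] [LieAlgebra ℝ 𝔤] (j : 𝔤 →ₗ[ℝ] 𝔤) (X Y : 𝔤) : 𝔤 :=
  ⁅j X, j Y⁆ - j ⁅j X, Y⁆ - j ⁅X, j Y⁆ - ⁅X, Y⁆

/-- A subspace `W` of a Lie algebra is involutive if `⁅W, W⁆ ⊆ W`. -/
def IsInvolutive {𝔤 : Type*} [LieRing 𝔤] [LieAlgebra ℝ 𝔤] (W : Set 𝔤) : Prop :=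
  ∀ u ∈ W, ∀ v ∈ W, ⁅u, v⁆ ∈ W

set_option maxHeartbeats 2000000 in
/-- Example 3.  Basis `b 0 = X₁`, `b 1 = X₂`, `b 2 = Y₁`, `b 3 = Y₂`;
only nonvanishing brackets `⁅X₁, X₂⁆ = (1/2)(X₂ + Y₂)`, `⁅X₁, Y₁⁆ = Y₁`,
`⁅X₁, Y₂⁆ = (1/2) Y₂`, `⁅X₂, Y₂⁆ = Y₁`; standard `Ω` and `j`.
Then `Ω` is a nondegenerate 2-cocycle, `j` is a positive compatible complex structure,
`Im N^j = span {X₂, Y₂}` is not involutive, and its `Ω`-orthogonal complement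
`span {X₁, Y₁}` is involutive. -/
theorem stmt_10 (𝔤 : Type*) [LieRing 𝔤] [LieAlgebra ℝ 𝔤]
    (b : Module.Basis (Fin 4) ℝ 𝔤)
    (hbr : ∀ i k : Fin 4, ⁅b i, b k⁆ =
      if i = 0 ∧ k = 1 then (1/2 : ℝ) • (b 1 + b 3) else
      if i = 1 ∧ k = 0 then -((1/2 : ℝ) • (b 1 + b 3)) else
      if i = 0 ∧ k = 2 then b 2 else if i = 2 ∧ k = 0 then -(b 2) else
      if i = 0 ∧ k = 3 then (1/2 : ℝ) • b 3 else
      if i = 3 ∧ k = 0 then -((1/2 : ℝ) • b 3) else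
      if i = 1 ∧ k = 3 then b 2 else if i = 3 ∧ k = 1 then -(b 2) else 0)
    (Ω : 𝔤 →ₗ[ℝ] 𝔤 →ₗ[ℝ] ℝ)
    (hΩ : ∀ i k : Fin 4, Ω (b i) (b k) =
      !![0,0,1,0; 0,0,0,1; -1,0,0,0; 0,-1,0,0] i k)
    (j : 𝔤 →ₗ[ℝ] 𝔤)
    (hj0 : j (b 0) = b 2) (hj1 : j (b 1) = b 3)
    (hj2 : j (b 2) = -(b 0)) (hj3 : j (b 3) = -(b 1)) :
    (∀ X : 𝔤, (∀ Y : 𝔤, Ω X Y = 0) → X = 0) ∧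
    (∀ X Y Z : 𝔤, Ω ⁅X, Y⁆ Z + Ω ⁅Y, Z⁆ X + Ω ⁅Z, X⁆ Y = 0) ∧
    (∀ X : 𝔤, j (j X) = -X) ∧
    (∀ X Y : 𝔤, Ω (j X) (j Y) = Ω X Y) ∧
    (∀ X : 𝔤, X ≠ 0 → 0 < Ω X (j X)) ∧
    Submodule.span ℝ {v : 𝔤 | ∃ X Y : 𝔤, v = algNijenhuis j X Y} =
      Submodule.span ℝ {b 1, b 3} ∧
    ¬ IsInvolutive (↑(Submodule.span ℝ ({b 1, b 3} : Set 𝔤)) : Set 𝔤) ∧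
    {x : 𝔤 | ∀ w ∈ Submodule.span ℝ ({b 1, b 3} : Set 𝔤), Ω w x = 0} =
      (↑(Submodule.span ℝ ({b 0, b 2} : Set 𝔤)) : Set 𝔤) ∧
    IsInvolutive (↑(Submodule.span ℝ ({b 0, b 2} : Set 𝔤)) : Set 𝔤) := by
  have hrep : ∀ X : 𝔤, ∃ a c d e : ℝ, X = a • b 0 + c • b 1 + d • b 2 + e • b 3 := by
    intro X
    refine ⟨b.repr X 0, b.repr X 1, b.repr X 2, b.repr X 3, ?_⟩
    have h := b.sum_repr X
    rw [Fin.sum_univ_four] at h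
    exact h.symm
  have hb00 : ⁅b 0, b 0⁆ = 0 := by
    rw [hbr]; simp; try module
  have hb01 : ⁅b 0, b 1⁆ = (1/2 : ℝ) • b 1 + (1/2 : ℝ) • b 3 := by
    rw [hbr]; simp; try module
  have hb02 : ⁅b 0, b 2⁆ = b 2 := by
    rw [hbr]; simp; try module
  have hb03 : ⁅b 0, b 3⁆ = (1/2 : ℝ) • b 3 := by
    rw [hbr]; simp; try module
  have hb10 : ⁅b 1, b 0⁆ = -((1/2 : ℝ) • b 1 + (1/2 : ℝ) • b 3) := by
    rw [hbr]; simp; try module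
  have hb11 : ⁅b 1, b 1⁆ = 0 := by
    rw [hbr]; simp; try module
  have hb12 : ⁅b 1, b 2⁆ = 0 := by
    rw [hbr]; simp; try module
  have hb13 : ⁅b 1, b 3⁆ = b 2 := by
    rw [hbr]; simp; try module
  have hb20 : ⁅b 2, b 0⁆ = -(b 2) := by
    rw [hbr]; simp; try module
  have hb21 : ⁅b 2, b 1⁆ = 0 := by
    rw [hbr]; simp; try module
  have hb22 : ⁅b 2, b 2⁆ = 0 := by
    rw [hbr]; simp; try module
  have hb23 : ⁅b 2, b 3⁆ = 0 := by
    rw [hbr]; simp; try module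
  have hb30 : ⁅b 3, b 0⁆ = -((1/2 : ℝ) • b 3) := by
    rw [hbr]; simp; try module
  have hb31 : ⁅b 3, b 1⁆ = -(b 2) := by
    rw [hbr]; simp; try module
  have hb32 : ⁅b 3, b 2⁆ = 0 := by
    rw [hbr]; simp; try module
  have hb33 : ⁅b 3, b 3⁆ = 0 := by
    rw [hbr]; simp; try module
  have w00 : Ω (b 0) (b 0) = 0 := by
    have h := hΩ 0 0; norm_num [Matrix.cons_val_zero, Matrix.cons_val_one, Matrix.head_cons] at h; simpa using h
  have w01 : Ω (b 0) (b 1) = 0 := by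
    have h := hΩ 0 1; norm_num [Matrix.cons_val_zero, Matrix.cons_val_one, Matrix.head_cons] at h; simpa using h
  have w02 : Ω (b 0) (b 2) = 1 := by
    have h := hΩ 0 2; norm_num [Matrix.cons_val_zero, Matrix.cons_val_one, Matrix.head_cons] at h; simpa using h
  have w03 : Ω (b 0) (b 3) = 0 := by
    have h := hΩ 0 3; norm_num [Matrix.cons_val_zero, Matrix.cons_val_one, Matrix.head_cons] at h; simpa using h
  have w10 : Ω (b 1) (b 0) = 0 := by
    have h := hΩ 1 0; norm_num [Matrix.cons_val_zero, Matrix.cons_val_one, Matrix.head_cons] at h; simpa using h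
  have w11 : Ω (b 1) (b 1) = 0 := by
    have h := hΩ 1 1; norm_num [Matrix.cons_val_zero, Matrix.cons_val_one, Matrix.head_cons] at h; simpa using h
  have w12 : Ω (b 1) (b 2) = 0 := by
    have h := hΩ 1 2; norm_num [Matrix.cons_val_zero, Matrix.cons_val_one, Matrix.head_cons] at h; simpa using h
  have w13 : Ω (b 1) (b 3) = 1 := by
    have h := hΩ 1 3; norm_num [Matrix.cons_val_zero, Matrix.cons_val_one, Matrix.head_cons] at h; simpa using h
  have w20 : Ω (b 2) (b 0) = -1 := by
    have h := hΩ 2 0; norm_num [Matrix.cons_val_zero, Matrix.cons_val_one, Matrix.head_cons] at h; simpa using h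
  have w21 : Ω (b 2) (b 1) = 0 := by
    have h := hΩ 2 1; norm_num [Matrix.cons_val_zero, Matrix.cons_val_one, Matrix.head_cons] at h; simpa using h
  have w22 : Ω (b 2) (b 2) = 0 := by
    have h := hΩ 2 2; norm_num [Matrix.cons_val_zero, Matrix.cons_val_one, Matrix.head_cons] at h; simpa using h
  have w23 : Ω (b 2) (b 3) = 0 := by
    have h := hΩ 2 3; norm_num [Matrix.cons_val_zero, Matrix.cons_val_one, Matrix.head_cons] at h; simpa using h
  have w30 : Ω (b 3) (b 0) = 0 := by
    have h := hΩ 3 0; norm_num [Matrix.cons_val_zero, Matrix.cons_val_one, Matrix.head_cons] at h; simpa using h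
  have w31 : Ω (b 3) (b 1) = -1 := by
    have h := hΩ 3 1; norm_num [Matrix.cons_val_zero, Matrix.cons_val_one, Matrix.head_cons] at h; simpa using h
  have w32 : Ω (b 3) (b 2) = 0 := by
    have h := hΩ 3 2; norm_num [Matrix.cons_val_zero, Matrix.cons_val_one, Matrix.head_cons] at h; simpa using h
  have w33 : Ω (b 3) (b 3) = 0 := by
    have h := hΩ 3 3; norm_num [Matrix.cons_val_zero, Matrix.cons_val_one, Matrix.head_cons] at h; simpa using h
  have hpos : ∀ X : 𝔤, X ≠ 0 → 0 < Ω X (j X) := by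
    intro X hX
    obtain ⟨x0, x1, x2, x3, rfl⟩ := hrep X
    have key : Ω (x0 • b 0 + x1 • b 1 + x2 • b 2 + x3 • b 3)
        (j (x0 • b 0 + x1 • b 1 + x2 • b 2 + x3 • b 3))
        = x0 * x0 + x1 * x1 + x2 * x2 + x3 * x3 := by
      simp only [hb00, hb01, hb02, hb03, hb10, hb11, hb12, hb13, hb20, hb21, hb22, hb23, hb30, hb31, hb32, hb33, hj0, hj1, hj2, hj3, w00, w01, w02, w03, w10, w11, w12, w13, w20, w21, w22, w23, w30, w31, w32, w33, lie_add, add_lie, lie_smul, smul_lie, lie_neg, neg_lie, lie_zero, zero_lie, map_add, map_smul, map_neg, map_zero, LinearMap.add_apply, LinearMap.smul_apply, LinearMap.neg_apply, LinearMap.zero_apply, smul_add, smul_neg, smul_zero, smul_smul, smul_eq_mul, mul_zero, mul_one, mul_neg, neg_neg, add_zero, zero_add, neg_zero]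
      try ring
    rw [key]
    have hne : x0 ≠ 0 ∨ x1 ≠ 0 ∨ x2 ≠ 0 ∨ x3 ≠ 0 := by
      by_contra hc
      push_neg at hc
      obtain ⟨e0, e1, e2, e3⟩ := hc
      exact hX (by rw [e0, e1, e2, e3]; module)
    rcases hne with h | h | h | h <;>
      nlinarith [mul_self_pos.mpr h, mul_self_nonneg x0, mul_self_nonneg x1, mul_self_nonneg x2, mul_self_nonneg x3]
  have hNmem : ∀ X Y : 𝔤, algNijenhuis j X Y ∈ Submodule.span ℝ ({b 1, b 3} : Set 𝔤) := by
    intro X Y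
    obtain ⟨x0, x1, x2, x3, rfl⟩ := hrep X
    obtain ⟨y0, y1, y2, y3, rfl⟩ := hrep Y
    have key : algNijenhuis j (x0 • b 0 + x1 • b 1 + x2 • b 2 + x3 • b 3)
        (y0 • b 0 + y1 • b 1 + y2 • b 2 + y3 • b 3)
        = ((1/2 : ℝ) * (x1 * y2 - x2 * y1) - (1/2 : ℝ) * (x0 * y3 - x3 * y0)) • b 1
          + ((1/2 : ℝ) * (x2 * y3 - x3 * y2) - (1/2 : ℝ) * (x0 * y1 - x1 * y0)) • b 3 := by
      simp only [algNijenhuis, hb00, hb01, hb02, hb03, hb10, hb11, hb12, hb13, hb20, hb21, hb22, hb23, hb30, hb31, hb32, hb33, hj0, hj1, hj2, hj3, lie_add, add_lie, lie_smul, smul_lie, lie_neg, neg_lie, lie_zero, zero_lie, map_add, map_smul, map_neg, map_zero, map_sub, smul_add, smul_neg, smul_zero, smul_smul]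
      try module
    rw [key]
    exact add_mem
      (Submodule.smul_mem _ _ (Submodule.subset_span (Set.mem_insert _ _)))
      (Submodule.smul_mem _ _ (Submodule.subset_span (Set.mem_insert_of_mem _ rfl)))
  refine ⟨?_, ?_, ?_, ?_, hpos, ?_, ?_, ?_, ?_⟩
  · -- nondegenerate
    intro X hXY
    by_contra hne
    have h := hpos X hne
    rw [hXY (j X)] at h
    exact lt_irrefl 0 h
  · -- cocycle
    intro X Y Z
    obtain ⟨x0, x1, x2, x3, rfl⟩ := hrep X
    obtain ⟨y0, y1, y2, y3, rfl⟩ := hrep Y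
    obtain ⟨z0, z1, z2, z3, rfl⟩ := hrep Z
    simp only [hb00, hb01, hb02, hb03, hb10, hb11, hb12, hb13, hb20, hb21, hb22, hb23, hb30, hb31, hb32, hb33, hj0, hj1, hj2, hj3, w00, w01, w02, w03, w10, w11, w12, w13, w20, w21, w22, w23, w30, w31, w32, w33, lie_add, add_lie, lie_smul, smul_lie, lie_neg, neg_lie, lie_zero, zero_lie, map_add, map_smul, map_neg, map_zero, LinearMap.add_apply, LinearMap.smul_apply, LinearMap.neg_apply, LinearMap.zero_apply, smul_add, smul_neg, smul_zero, smul_smul, smul_eq_mul, mul_zero, mul_one, mul_neg, neg_neg, add_zero, zero_add, neg_zero]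
    try ring
  · -- j ∘ j = -1
    intro X
    obtain ⟨x0, x1, x2, x3, rfl⟩ := hrep X
    simp only [map_add, map_smul, hj0, hj1, hj2, hj3, smul_neg, map_neg]
    module
  · -- compatibility
    intro X Y
    obtain ⟨x0, x1, x2, x3, rfl⟩ := hrep X
    obtain ⟨y0, y1, y2, y3, rfl⟩ := hrep Y
    simp only [hb00, hb01, hb02, hb03, hb10, hb11, hb12, hb13, hb20, hb21, hb22, hb23, hb30, hb31, hb32, hb33, hj0, hj1, hj2, hj3, w00, w01, w02, w03, w10, w11, w12, w13, w20, w21, w22, w23, w30, w31, w32, w33, lie_add, add_lie, lie_smul, smul_lie, lie_neg, neg_lie, lie_zero, zero_lie, map_add, map_smul, map_neg, map_zero, LinearMap.add_apply, LinearMap.smul_apply, LinearMap.neg_apply, LinearMap.zero_apply, smul_add, smul_neg, smul_zero, smul_smul, smul_eq_mul, mul_zero, mul_one, mul_neg, neg_neg, add_zero, zero_add, neg_zero]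
    try ring
  · -- span of image of N
    apply le_antisymm
    · rw [Submodule.span_le]
      rintro v ⟨X, Y, rfl⟩
      exact hNmem X Y
    · rw [Submodule.span_le]
      rintro v hv
      simp only [Set.mem_insert_iff, Set.mem_singleton_iff] at hv
      rcases hv with rfl | rfl
      · have e1 : b 1 = (2 : ℝ) • algNijenhuis j (b 1) (b 2) := by
          simp only [algNijenhuis, hb00, hb01, hb02, hb03, hb10, hb11, hb12, hb13, hb20, hb21, hb22, hb23, hb30, hb31, hb32, hb33, hj0, hj1, hj2, hj3, lie_add, add_lie, lie_smul, smul_lie, lie_neg, neg_lie, lie_zero, zero_lie, map_add, map_smul, map_neg, map_zero, map_sub, smul_add, smul_neg, smul_zero, smul_smul]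
          module
        rw [e1]
        exact Submodule.smul_mem _ _ (Submodule.subset_span ⟨b 1, b 2, rfl⟩)
      · have e3 : b 3 = (2 : ℝ) • algNijenhuis j (b 2) (b 3) := by
          simp only [algNijenhuis, hb00, hb01, hb02, hb03, hb10, hb11, hb12, hb13, hb20, hb21, hb22, hb23, hb30, hb31, hb32, hb33, hj0, hj1, hj2, hj3, lie_add, add_lie, lie_smul, smul_lie, lie_neg, neg_lie, lie_zero, zero_lie, map_add, map_smul, map_neg, map_zero, map_sub, smul_add, smul_neg, smul_zero, smul_smul]
          module
        rw [e3]
        exact Submodule.smul_mem _ _ (Submodule.subset_span ⟨b 2, b 3, rfl⟩)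
  · -- not involutive
    intro h
    have h2 := h (b 1) (Submodule.subset_span (Set.mem_insert _ _))
      (b 3) (Submodule.subset_span (Set.mem_insert_of_mem _ rfl))
    rw [hb13] at h2
    rw [SetLike.mem_coe, Submodule.mem_span_pair] at h2
    obtain ⟨a, c, hac⟩ := h2
    have hO : Ω (b 0) (a • b 1 + c • b 3) = Ω (b 0) (b 2) := by rw [hac]
    simp only [map_add, map_smul, w01, w03, w02, smul_eq_mul, mul_zero, add_zero] at hO
    exact one_ne_zero hO.symm
  · -- orthogonal complement
    ext x
    simp only [Set.mem_setOf_eq, SetLike.mem_coe]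
    constructor
    · intro h
      have h1 := h (b 1) (Submodule.subset_span (Set.mem_insert _ _))
      have h3 := h (b 3) (Submodule.subset_span (Set.mem_insert_of_mem _ rfl))
      obtain ⟨x0, x1, x2, x3, rfl⟩ := hrep x
      simp only [map_add, map_smul, w10, w11, w12, w13, w30, w31, w32, w33,
        smul_eq_mul, mul_zero, mul_one, mul_neg, add_zero, zero_add] at h1 h3
      have hx3 : x3 = 0 := by linarith
      have hx1 : x1 = 0 := by linarith
      rw [Submodule.mem_span_pair]
      exact ⟨x0, x2, by rw [hx1, hx3]; module⟩
    · intro hx w hw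
      rw [Submodule.mem_span_pair] at hx hw
      obtain ⟨a, c, rfl⟩ := hx
      obtain ⟨d, e, rfl⟩ := hw
      simp only [map_add, map_smul, w10, w12, w30, w32, LinearMap.add_apply,
        LinearMap.smul_apply, smul_eq_mul, mul_zero, add_zero]
  · -- involutive
    intro u hu v hv
    rw [SetLike.mem_coe, Submodule.mem_span_pair] at hu hv
    obtain ⟨a, c, rfl⟩ := hu
    obtain ⟨d, e, rfl⟩ := hv
    rw [SetLike.mem_coe, Submodule.mem_span_pair]
    refine ⟨0, a * e - c * d, ?_⟩
    simp only [lie_add, add_lie, lie_smul, smul_lie, hb00, hb02, hb20, hb22,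
      smul_zero, smul_neg, smul_smul, zero_add, add_zero]
    try module
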